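/- Matrix Taylor expansion for polynomials via divided differences: let f be a polynomial, λ an N×N diagonal matrix with diagonal entries λ_i, and τ an N×N matrix. Then [f(λ+τ)]_{ip} = f(λ_i)δ_{ip} + Σ_{n≥1} Σ_{m_1,…,m_{n-1}} f[λ_i, λ_{m_1}, …, λ_{m_{n-1}}, λ_p] · τ_{i m_1} τ_{m_1 m_2} ⋯ τ_{m_{n-1} p}, where f[·] denotes the (possibly confluent) divided difference of f and the outer sum is finite (terminating at n = deg f). -/

import Mathlib

/-- Complete homogeneous symmetric polynomial `h_k` in the variables `x 0, …, x (m-1)`. -/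
noncomputable def hsym {m : ℕ} (k : ℕ) (x : Fin m → ℂ) : ℂ :=
  ∑ a ∈ Finset.Nat.antidiagonalTuple m k, ∏ j : Fin m, x j ^ a j

/-- Confluent (Hermite) divided difference of a polynomial `f = Σ c_p z^p`:
`f[x_0,…,x_n] = Σ_p c_p h_{p-n}(x_0,…,x_n)`, with the monomial term zero for `n > p`. -/
noncomputable def dd {n : ℕ} (f : Polynomial ℂ) (x : Fin (n + 1) → ℂ) : ℂ :=
  ∑ p ∈ f.support, f.coeff p * (if n ≤ p then hsym (p - n) x else 0)

/-- The index chain `i, m_1, …, m_n, p`. -/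
def chain {N n : ℕ} (i p : Fin N) (m : Fin n → Fin N) : Fin (n + 2) → Fin N :=
  Fin.cons i (Fin.snoc m p)

lemma hsym_zero {m : ℕ} (x : Fin m → ℂ) : hsym 0 x = 1 := by
  simp [hsym, Finset.Nat.antidiagonalTuple_zero_right]

lemma hsym_fin0 (k : ℕ) (x : Fin 0 → ℂ) : hsym k x = if k = 0 then 1 else 0 := by
  cases k with
  | zero => simp [hsym_zero]
  | succ k => simp [hsym, Finset.Nat.antidiagonalTuple_zero_succ]

lemma hsym_cons {m : ℕ} (k : ℕ) (x0 : ℂ) (x : Fin m → ℂ) :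
    hsym k (Fin.cons x0 x) = ∑ j ∈ Finset.range (k + 1), x0 ^ j * hsym (k - j) x := by
  rw [hsym]
  rw [show (∑ j ∈ Finset.range (k+1), x0 ^ j * hsym (k - j) x)
      = ∑ q ∈ (Finset.range (k+1)).sigma (fun j => Finset.Nat.antidiagonalTuple m (k - j)),
          x0 ^ q.1 * ∏ j : Fin m, x j ^ q.2 j by
    rw [Finset.sum_sigma]
    exact Finset.sum_congr rfl fun j _ => by rw [hsym, Finset.mul_sum]]
  refine Finset.sum_nbij' (fun a => ⟨a 0, Fin.tail a⟩) (fun q => Fin.cons q.1 q.2) ?_ ?_ ?_ ?_ ?_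
  · intro a ha
    rw [Finset.Nat.mem_antidiagonalTuple, Fin.sum_univ_succ] at ha
    simp only [Finset.mem_sigma, Finset.mem_range, Finset.Nat.mem_antidiagonalTuple]
    refine ⟨by omega, ?_⟩
    have : ∑ i : Fin m, Fin.tail a i = ∑ i : Fin m, a i.succ := rfl
    omega
  · intro q hq
    simp only [Finset.mem_sigma, Finset.mem_range, Finset.Nat.mem_antidiagonalTuple] at hq
    rw [Finset.Nat.mem_antidiagonalTuple, Fin.sum_univ_succ]
    simp only [Fin.cons_zero, Fin.cons_succ]
    omega
  · intro a _; exact Fin.cons_self_tail a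
  · intro q _; simp
  · intro a _
    rw [Fin.prod_univ_succ]
    simp [Fin.tail]

lemma hsym_one (k : ℕ) (x : Fin 1 → ℂ) : hsym k x = (x 0) ^ k := by
  simp [hsym, Finset.Nat.antidiagonalTuple_one]

lemma hsym_cons_succ {m : ℕ} (k : ℕ) (x0 : ℂ) (x : Fin m → ℂ) :
    hsym (k + 1) (Fin.cons x0 x) = x0 * hsym k (Fin.cons x0 x) + hsym (k + 1) x := by
  rw [hsym_cons, hsym_cons, Finset.sum_range_succ']
  simp only [pow_zero, one_mul, Nat.sub_zero, pow_succ, Nat.succ_sub_succ]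
  rw [Finset.mul_sum]
  congr 1
  exact Finset.sum_congr rfl fun j _ => by ring

lemma chain_cons {N n : ℕ} (i p k : Fin N) (m : Fin n → Fin N) :
    chain i p (Fin.cons k m) = Fin.cons i (chain k p m) := by
  unfold chain
  exact congrArg _ (Fin.cons_snoc_eq_snoc_cons k m p).symm

noncomputable def Tm {N : ℕ} (τ : Matrix (Fin N) (Fin N) ℂ) {n : ℕ} (i p : Fin N)
    (m : Fin n → Fin N) : ℂ :=
  ∏ j : Fin (n + 1), τ (chain i p m j.castSucc) (chain i p m j.succ)

lemma Tm_cons {N : ℕ} (τ : Matrix (Fin N) (Fin N) ℂ) {n : ℕ} (i p k : Fin N)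
    (m : Fin n → Fin N) : Tm τ i p (Fin.cons k m) = τ i k * Tm τ k p m := by
  unfold Tm
  rw [Fin.prod_univ_succ, chain_cons]
  congr 1

lemma Tm_zero {N : ℕ} (τ : Matrix (Fin N) (Fin N) ℂ) (i p : Fin N) (m : Fin 0 → Fin N) :
    Tm τ i p m = τ i p := by
  unfold Tm
  rw [Fin.prod_univ_one]
  congr 1

lemma sum_fun_cons {N n : ℕ} (F : (Fin (n + 1) → Fin N) → ℂ) :
    ∑ m' : Fin (n + 1) → Fin N, F m' = ∑ k : Fin N, ∑ m : Fin n → Fin N, F (Fin.cons k m) := by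
  calc ∑ m' : Fin (n + 1) → Fin N, F m'
      = ∑ q : Fin N × (Fin n → Fin N), F (Fin.cons q.1 q.2) :=
        (Fintype.sum_equiv (Fin.consEquiv fun _ => Fin N)
          (fun q => F (Fin.cons q.1 q.2)) F (fun q => rfl)).symm
    _ = ∑ k : Fin N, ∑ m : Fin n → Fin N, F (Fin.cons k m) := Fintype.sum_prod_type _

lemma comp_chain_cons {N n : ℕ} (l : Fin N → ℂ) (i p k : Fin N) (m : Fin n → Fin N) :
    (fun j => l (chain i p (Fin.cons k m) j)) = Fin.cons (l i) (fun j => l (chain k p m j)) := by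
  rw [chain_cons]
  exact Fin.comp_cons l i (chain k p m)

lemma vars0 {N : ℕ} (l : Fin N → ℂ) (i p : Fin N) (m : Fin 0 → Fin N) :
    (fun j => l (chain i p m j)) = Fin.cons (l i) (fun _ : Fin 1 => l p) := by
  funext j
  refine Fin.cases ?_ (fun j' => ?_) j
  · rfl
  · have hj : j' = Fin.last 0 := Subsingleton.elim _ _
    show l (chain i p m j'.succ) = l p
    rw [chain, Fin.cons_succ, hj, Fin.snoc_last]

lemma hsym_two (q : ℕ) (x0 x1 : ℂ) :
    hsym (q + 1) (Fin.cons x0 (fun _ : Fin 1 => x1)) =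
      x0 * hsym q (Fin.cons x0 (fun _ : Fin 1 => x1)) + x1 ^ (q + 1) := by
  rw [hsym_cons_succ]
  congr 1
  exact hsym_one _ _

noncomputable def RHSe {N : ℕ} (l : Fin N → ℂ) (τ : Matrix (Fin N) (Fin N) ℂ)
    (q : ℕ) (i p : Fin N) : ℂ :=
  (l i) ^ q * (if i = p then 1 else 0) +
    ∑ n ∈ Finset.range q, ∑ m : Fin n → Fin N,
      hsym (q - (n + 1)) (fun j => l (chain i p m j)) * Tm τ i p m

lemma level_succ {N : ℕ} (l : Fin N → ℂ) (τ : Matrix (Fin N) (Fin N) ℂ)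
    (q n : ℕ) (i p : Fin N) (h : n < q) :
    ∑ m' : Fin (n + 1) → Fin N,
        hsym (q - (n + 1)) (fun j => l (chain i p m' j)) * Tm τ i p m'
    = (if n + 1 < q then
        l i * ∑ m' : Fin (n + 1) → Fin N,
          hsym (q - (n + 2)) (fun j => l (chain i p m' j)) * Tm τ i p m'
       else 0)
      + ∑ k : Fin N, τ i k * ∑ m : Fin n → Fin N,
          hsym (q - (n + 1)) (fun j => l (chain k p m j)) * Tm τ k p m := by
  by_cases hc : n + 1 < q
  · rw [if_pos hc]
    have he : q - (n + 1) = (q - (n + 2)) + 1 := by omega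
    rw [he, sum_fun_cons, sum_fun_cons, Finset.mul_sum]
    rw [← Finset.sum_add_distrib]
    refine Finset.sum_congr rfl fun k _ => ?_
    rw [Finset.mul_sum, Finset.mul_sum, ← Finset.sum_add_distrib]
    refine Finset.sum_congr rfl fun m _ => ?_
    rw [comp_chain_cons, Tm_cons, hsym_cons_succ]
    ring
  · rw [if_neg hc, zero_add]
    have he : q - (n + 1) = 0 := by omega
    rw [he, sum_fun_cons]
    refine Finset.sum_congr rfl fun k _ => ?_
    rw [Finset.mul_sum]
    refine Finset.sum_congr rfl fun m _ => ?_
    rw [Tm_cons, hsym_zero, hsym_zero]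
    ring

lemma RHSe_step {N : ℕ} (l : Fin N → ℂ) (τ : Matrix (Fin N) (Fin N) ℂ)
    (q : ℕ) (i p : Fin N) :
    RHSe l τ (q + 1) i p = l i * RHSe l τ q i p + ∑ k : Fin N, τ i k * RHSe l τ q k p := by
  unfold RHSe
  have hsum_delta : ∑ k : Fin N, τ i k * ((l k) ^ q * (if k = p then 1 else 0))
      = τ i p * (l p) ^ q := by
    rw [Finset.sum_eq_single p]
    · simp
    · intro b _ hb; simp [hb]
    · intro hp; exact absurd (Finset.mem_univ p) hp
  have hlevel0 : ∀ m : Fin 0 → Fin N,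
      hsym (q + 1 - (0 + 1)) (fun j => l (chain i p m j)) * Tm τ i p m
      = hsym q (Fin.cons (l i) (fun _ : Fin 1 => l p)) * τ i p := by
    intro m
    rw [vars0, Tm_zero]
    norm_num
  rw [Finset.sum_range_succ']
  rw [mul_add, Finset.mul_sum]
  simp_rw [mul_add]
  rw [Finset.sum_add_distrib, hsum_delta]
  have h0sum : (∑ m : Fin 0 → Fin N,
      hsym (q + 1 - (0 + 1)) (fun j => l (chain i p m j)) * Tm τ i p m)
      = hsym q (Fin.cons (l i) (fun _ : Fin 1 => l p)) * τ i p := by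
    rw [Fintype.sum_unique, hlevel0]
  rw [h0sum]
  have hshift : ∀ n ∈ Finset.range q,
      (∑ m : Fin (n + 1) → Fin N,
        hsym (q + 1 - (n + 1 + 1)) (fun j => l (chain i p m j)) * Tm τ i p m)
      = (if n + 1 < q then
          l i * ∑ m' : Fin (n + 1) → Fin N,
            hsym (q - (n + 2)) (fun j => l (chain i p m' j)) * Tm τ i p m'
         else 0)
        + ∑ k : Fin N, τ i k * ∑ m : Fin n → Fin N,
            hsym (q - (n + 1)) (fun j => l (chain k p m j)) * Tm τ k p m := by
    intro n hn
    rw [Finset.mem_range] at hn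
    have : q + 1 - (n + 1 + 1) = q - (n + 1) := by omega
    rw [this]
    exact level_succ l τ q n i p hn
  rw [Finset.sum_congr rfl hshift, Finset.sum_add_distrib]
  rw [Finset.sum_comm]
  cases q with
  | zero => simp [hsym_zero]
  | succ Q =>
      have hifsum : (∑ n ∈ Finset.range (Q + 1),
          (if n + 1 < Q + 1 then
            l i * ∑ m' : Fin (n + 1) → Fin N,
              hsym (Q + 1 - (n + 2)) (fun j => l (chain i p m' j)) * Tm τ i p m'
           else 0))
          = ∑ n ∈ Finset.range Q,
              l i * ∑ m' : Fin (n + 1) → Fin N,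
                hsym (Q + 1 - (n + 2)) (fun j => l (chain i p m' j)) * Tm τ i p m' := by
        rw [Finset.sum_range_succ, if_neg (by omega), add_zero]
        exact Finset.sum_congr rfl fun n hn => by
          rw [Finset.mem_range] at hn; rw [if_pos (by omega)]
      rw [hifsum]
      have hrhs : (∑ n ∈ Finset.range (Q + 1),
          l i * ∑ m : Fin n → Fin N,
            hsym (Q + 1 - (n + 1)) (fun j => l (chain i p m j)) * Tm τ i p m)
          = (∑ n ∈ Finset.range Q,
              l i * ∑ m : Fin (n + 1) → Fin N,
                hsym (Q + 1 - (n + 2)) (fun j => l (chain i p m j)) * Tm τ i p m)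
            + l i * ∑ m : Fin 0 → Fin N,
                hsym (Q + 1 - (0 + 1)) (fun j => l (chain i p m j)) * Tm τ i p m := by
        rw [Finset.sum_range_succ']
      have h0sum' : (∑ m : Fin 0 → Fin N,
          hsym (Q + 1 - (0 + 1)) (fun j => l (chain i p m j)) * Tm τ i p m)
          = hsym Q (Fin.cons (l i) (fun _ : Fin 1 => l p)) * τ i p := by
        rw [Fintype.sum_unique, vars0, Tm_zero]
        norm_num
      rw [hrhs, h0sum']
      rw [hsym_two]
      simp_rw [Finset.mul_sum]
      ring

lemma key {N : ℕ} (l : Fin N → ℂ) (τ : Matrix (Fin N) (Fin N) ℂ) (q : ℕ) :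
    ∀ i p : Fin N, ((Matrix.diagonal l + τ) ^ q) i p = RHSe l τ q i p := by
  induction q with
  | zero =>
      intro i p
      simp [RHSe, Matrix.one_apply]
  | succ q ih =>
      intro i p
      rw [pow_succ', Matrix.mul_apply, RHSe_step]
      have hd : ∀ k, (Matrix.diagonal l + τ) i k * ((Matrix.diagonal l + τ) ^ q) k p
          = (if i = k then l i * RHSe l τ q k p else 0) + τ i k * RHSe l τ q k p := by
        intro k
        rw [Matrix.add_apply, Matrix.diagonal_apply, add_mul, ih]
        by_cases h : i = k <;> simp [h]
      rw [Finset.sum_congr rfl fun k _ => hd k, Finset.sum_add_distrib,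
        Finset.sum_ite_eq Finset.univ i (fun k => l i * RHSe l τ q k p)]
      simp

theorem stmt15 (N : ℕ) (f : Polynomial ℂ) (l : Fin N → ℂ)
    (τ : Matrix (Fin N) (Fin N) ℂ) (i p : Fin N) :
    (Polynomial.aeval (Matrix.diagonal l + τ) f) i p =
      f.eval (l i) * (if i = p then 1 else 0)
      + ∑ n ∈ Finset.range f.natDegree, ∑ m : Fin n → Fin N,
          dd f (fun j => l (chain i p m j)) *
            ∏ j : Fin (n + 1), τ (chain i p m j.castSucc) (chain i p m j.succ) := by
  have hexp : (Polynomial.aeval (Matrix.diagonal l + τ) f) i p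
      = ∑ d ∈ Finset.range (f.natDegree + 1), f.coeff d * RHSe l τ d i p := by
    rw [Polynomial.aeval_eq_sum_range, Matrix.sum_apply]
    refine Finset.sum_congr rfl fun d _ => ?_
    rw [Matrix.smul_apply, key, smul_eq_mul]
  rw [hexp]
  unfold RHSe
  simp_rw [mul_add]
  rw [Finset.sum_add_distrib]
  congr 1
  · rw [Polynomial.eval_eq_sum_range, Finset.sum_mul]
    exact Finset.sum_congr rfl fun d _ => by ring
  · -- main part
    have stepA : ∀ d ∈ Finset.range (f.natDegree + 1),
        f.coeff d * (∑ n ∈ Finset.range d, ∑ m : Fin n → Fin N,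
            hsym (d - (n + 1)) (fun j => l (chain i p m j)) * Tm τ i p m)
        = ∑ n ∈ Finset.range f.natDegree,
            f.coeff d * (if n + 1 ≤ d then ∑ m : Fin n → Fin N,
              hsym (d - (n + 1)) (fun j => l (chain i p m j)) * Tm τ i p m else 0) := by
      intro d hd
      rw [Finset.mem_range] at hd
      rw [← Finset.mul_sum]
      congr 1
      have h1 : (∑ n ∈ Finset.range d, ∑ m : Fin n → Fin N,
            hsym (d - (n + 1)) (fun j => l (chain i p m j)) * Tm τ i p m)
          = ∑ n ∈ Finset.range d, (if n + 1 ≤ d then ∑ m : Fin n → Fin N,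
            hsym (d - (n + 1)) (fun j => l (chain i p m j)) * Tm τ i p m else 0) :=
        Finset.sum_congr rfl fun n hn => by
          rw [Finset.mem_range] at hn
          rw [if_pos (by omega)]
      rw [h1]
      refine Finset.sum_subset (Finset.range_subset_range.mpr (by omega)) ?_
      intro n _ hn
      rw [Finset.mem_range] at hn
      rw [if_neg (by omega)]
    rw [Finset.sum_congr rfl stepA, Finset.sum_comm]
    refine Finset.sum_congr rfl fun n _ => ?_
    have stepC : ∀ d, f.coeff d * (if n + 1 ≤ d then ∑ m : Fin n → Fin N,
          hsym (d - (n + 1)) (fun j => l (chain i p m j)) * Tm τ i p m else 0)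
        = ∑ m : Fin n → Fin N,
            (f.coeff d * (if n + 1 ≤ d then
              hsym (d - (n + 1)) (fun j => l (chain i p m j)) else 0)) * Tm τ i p m := by
      intro d
      by_cases h : n + 1 ≤ d
      · rw [if_pos h, Finset.mul_sum]
        refine Finset.sum_congr rfl fun m _ => ?_
        rw [if_pos h]; ring
      · rw [if_neg h]
        simp [if_neg h, show ¬ n < d by omega]
    rw [Finset.sum_congr rfl fun d _ => stepC d]
    have hsupp : (∑ d ∈ Finset.range (f.natDegree + 1), ∑ m : Fin n → Fin N,
          (f.coeff d * (if n + 1 ≤ d then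
            hsym (d - (n + 1)) (fun j => l (chain i p m j)) else 0)) * Tm τ i p m)
        = ∑ d ∈ f.support, ∑ m : Fin n → Fin N,
          (f.coeff d * (if n + 1 ≤ d then
            hsym (d - (n + 1)) (fun j => l (chain i p m j)) else 0)) * Tm τ i p m := by
      refine (Finset.sum_subset f.supp_subset_range_natDegree_succ ?_).symm
      intro d _ hd
      rw [Polynomial.notMem_support_iff] at hd
      simp [hd]
    rw [hsupp, Finset.sum_comm]
    refine Finset.sum_congr rfl fun m _ => ?_
    rw [dd, Finset.sum_mul]
    rfl
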